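/- Let tildeL = {(z,α,r) ∈ ℂ×ℝ×ℝ : 0 < r and |z| < r} and L = {(z,w) ∈ ℂ×ℂ : |z| < |w|}. Then the map π : tildeL → L defined by π(z,α,r) = (z, r·e^{iα}) is a covering map, and tildeL is simply connected; hence π is the universal covering of L. -/

import Mathlib

open Real

/-- `tildeL = {(z,α,r) ∈ ℂ×ℝ×ℝ : 0 < r, |z| < r}`. -/
def tL : Set (ℂ × ℝ × ℝ) := {x | 0 < x.2.2 ∧ ‖x.1‖ < x.2.2}

/-- `L = {(z,w) ∈ ℂ² : |z| < |w|}`. -/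
def Lset : Set (ℂ × ℂ) := {p | ‖p.1‖ < ‖p.2‖}

/-- The covering map `π(z,α,r) = (z, r·e^{iα})` from `tildeL` to `L`. -/
noncomputable def piCover : ↥tL → ↥Lset :=
  fun x => ⟨(x.1.1, (x.1.2.2 : ℂ) * Complex.exp ((x.1.2.1 : ℂ) * Complex.I)), by
    obtain ⟨⟨z, α, r⟩, hr, hz⟩ := x
    simp only [Lset, Set.mem_setOf_eq, norm_mul, Complex.norm_exp_ofReal_mul_I,
      Complex.norm_real, Real.norm_eq_abs, mul_one, abs_of_pos hr]
    exact hz⟩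

namespace Stmt7
open Complex

/-- key: real t differs from arg(exp(tI)) by 2π·integer -/
lemma exists_int (t : ℝ) : ∃ k : ℤ, t - Complex.arg (Complex.exp ((t:ℂ) * I)) = 2 * π * k := by
  have h1 : ‖Complex.exp ((t:ℂ) * I)‖ = 1 := norm_exp_ofReal_mul_I t
  have h2 := norm_mul_exp_arg_mul_I (Complex.exp ((t:ℂ) * I))
  rw [h1, ofReal_one, one_mul] at h2
  obtain ⟨n, hn⟩ := exp_eq_exp_iff_exists_int.mp h2
  refine ⟨-n, ?_⟩
  have h3 : ((Complex.arg (Complex.exp ((t:ℂ)*I)) : ℂ)) * I = ((t + n * (2*π) : ℝ) : ℂ) * I := by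
    rw [hn]; push_cast; ring
  have h4 := mul_right_cancel₀ I_ne_zero h3
  have h5 : Complex.arg (Complex.exp ((t:ℂ)*I)) = t + n * (2*π) := by exact_mod_cast h4
  rw [h5]; push_cast; ring

lemma exp_two_pi_int (m : ℤ) : Complex.exp (((2 * π * m : ℝ) : ℂ) * I) = 1 := by
  have := Complex.exp_int_mul_two_pi_mul_I m
  rw [← this]; congr 1; push_cast; ring

lemma continuous_piCover : Continuous piCover := by
  apply Continuous.subtype_mk
  fun_prop

/-- the branching angle data -/
noncomputable def brA (θ : ℝ) (x : ↥tL) : ℝ :=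
  Complex.arg ((piCover x).1.2 * Complex.exp ((↑(-θ) : ℂ) * I))

noncomputable def nIdx (θ : ℝ) (x : ↥tL) : ℤ :=
  round ((x.1.2.1 - θ - brA θ x) / (2 * π))

lemma pc_mul (θ : ℝ) (x : ↥tL) :
    (piCover x).1.2 * Complex.exp ((↑(-θ) : ℂ) * I)
      = (↑(x.1.2.2) : ℂ) * Complex.exp ((↑(x.1.2.1 - θ) : ℂ) * I) := by
  show (x.1.2.2 : ℂ) * Complex.exp ((x.1.2.1 : ℂ) * I) * _ = _
  rw [mul_assoc, ← Complex.exp_add]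
  congr 2
  push_cast; ring

lemma brA_eq (θ : ℝ) (x : ↥tL) :
    brA θ x = Complex.arg (Complex.exp ((↑(x.1.2.1 - θ) : ℂ) * I)) := by
  rw [brA, pc_mul, Complex.arg_real_mul _ x.2.1]

lemma nIdx_spec (θ : ℝ) (x : ↥tL) :
    x.1.2.1 - θ - brA θ x = 2 * π * nIdx θ x := by
  obtain ⟨k, hk⟩ := exists_int (x.1.2.1 - θ)
  rw [brA_eq] at *
  rw [nIdx, brA_eq, hk, mul_div_cancel_left₀ _ (by positivity : (2:ℝ)*π ≠ 0), round_intCast]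

noncomputable def invF (θ : ℝ) (y : ↥Lset × ℤ) : ↥tL :=
  ⟨(y.1.1.1, θ + Complex.arg (y.1.1.2 * Complex.exp ((↑(-θ) : ℂ) * I)) + 2 * π * y.2, ‖y.1.1.2‖),
   lt_of_le_of_lt (norm_nonneg _) y.1.2, y.1.2⟩

lemma piCover_invF (θ : ℝ) (y : ↥Lset × ℤ) : piCover (invF θ y) = y.1 := by
  apply Subtype.ext
  obtain ⟨⟨⟨z, w⟩, hw⟩, m⟩ := y
  refine Prod.ext rfl ?_
  show (↑‖w‖ : ℂ) * Complex.exp ((↑(θ + Complex.arg (w * Complex.exp ((↑(-θ):ℂ) * I)) + 2*π*(m:ℝ)) : ℂ) * I) = w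
  set a := Complex.arg (w * Complex.exp ((↑(-θ):ℂ) * I)) with ha
  have habs : (‖(w * Complex.exp ((↑(-θ):ℂ) * I))‖) = ‖w‖ := by
    rw [norm_mul, norm_exp_ofReal_mul_I, mul_one]
  have key : (↑‖w‖ : ℂ) * Complex.exp ((a:ℂ) * I) = w * Complex.exp ((↑(-θ):ℂ) * I) := by
    rw [← habs]; exact norm_mul_exp_arg_mul_I _
  have hee : Complex.exp ((↑(-θ):ℂ) * I) * Complex.exp ((θ:ℂ) * I) = 1 := by
    rw [← Complex.exp_add, ← Complex.exp_zero]; congr 1; push_cast; ring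
  have hsplit : Complex.exp ((↑(θ + a + 2*π*(m:ℝ)) : ℂ) * I)
      = Complex.exp ((a:ℂ) * I) * Complex.exp ((θ:ℂ) * I) * Complex.exp (((2*π*(m:ℝ) : ℝ):ℂ) * I) := by
    rw [← Complex.exp_add, ← Complex.exp_add]; congr 1; push_cast; ring
  rw [hsplit, exp_two_pi_int m]
  linear_combination Complex.exp ((θ:ℂ) * I) * key + w * hee

lemma left_inv' (θ : ℝ) (x : ↥tL) : invF θ (piCover x, nIdx θ x) = x := by
  obtain ⟨⟨z, α, r⟩, hr, hz⟩ := x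
  apply Subtype.ext
  have hs := nIdx_spec θ ⟨(z, α, r), hr, hz⟩
  refine Prod.ext rfl (Prod.ext ?_ ?_)
  · show θ + brA θ ⟨(z, α, r), hr, hz⟩ + 2 * π * (nIdx θ ⟨(z, α, r), hr, hz⟩ : ℝ) = α
    have : (α : ℝ) - θ - brA θ ⟨(z, α, r), hr, hz⟩ = 2 * π * (nIdx θ ⟨(z, α, r), hr, hz⟩ : ℝ) := hs
    linarith
  · show ‖(r : ℂ) * Complex.exp ((α : ℂ) * I)‖ = r
    rw [norm_mul, Complex.norm_exp_ofReal_mul_I, Complex.norm_real, Real.norm_eq_abs, mul_one,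
      abs_of_pos hr]

lemma right_inv' (θ : ℝ) (y : ↥Lset × ℤ) : (piCover (invF θ y), nIdx θ (invF θ y)) = y := by
  have h1 := piCover_invF θ y
  refine Prod.ext h1 ?_
  show nIdx θ (invF θ y) = y.2
  have hb : brA θ (invF θ y) = Complex.arg (y.1.1.2 * Complex.exp ((↑(-θ) : ℂ) * I)) := by
    rw [brA, h1]
  rw [nIdx, hb]
  show round ((θ + Complex.arg (y.1.1.2 * Complex.exp ((↑(-θ) : ℂ) * I)) + 2*π*(y.2:ℝ) - θ - _) / (2*π)) = y.2
  rw [show θ + Complex.arg (y.1.1.2 * Complex.exp ((↑(-θ) : ℂ) * I)) + 2*π*(y.2:ℝ) - θ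
      - Complex.arg (y.1.1.2 * Complex.exp ((↑(-θ) : ℂ) * I)) = 2*π*(y.2:ℝ) by ring,
    mul_div_cancel_left₀ _ (by positivity : (2:ℝ)*π ≠ 0), round_intCast]

end Stmt7

namespace Stmt7
open Complex

def bSet (θ : ℝ) : Set ↥Lset := {p | p.1.2 * Complex.exp ((↑(-θ) : ℂ) * I) ∈ Complex.slitPlane}

lemma isOpen_bSet (θ : ℝ) : IsOpen (bSet θ) :=
  isOpen_slitPlane.preimage (by fun_prop)

lemma continuousOn_nIdx (θ : ℝ) :
    ContinuousOn (fun x => (nIdx θ x : ℝ)) (piCover ⁻¹' bSet θ) := by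
  have hbrA : ContinuousOn (brA θ) (piCover ⁻¹' bSet θ) := by
    intro x hx
    have hc : Continuous fun x : ↥tL => (piCover x).1.2 * Complex.exp ((↑(-θ) : ℂ) * I) :=
      ((continuous_snd.comp (continuous_subtype_val.comp continuous_piCover)).mul continuous_const)
    exact (ContinuousAt.comp (f := fun x : ↥tL => (piCover x).1.2 * Complex.exp ((↑(-θ) : ℂ) * I))
      (Complex.continuousAt_arg hx) hc.continuousAt).continuousWithinAt
  have hG : ContinuousOn (fun x : ↥tL => (x.1.2.1 - θ - brA θ x) / (2 * π))
      (piCover ⁻¹' bSet θ) := by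
    apply ContinuousOn.div_const
    exact (((continuous_fst.comp (continuous_snd.comp continuous_subtype_val)).continuousOn).sub
      continuousOn_const).sub hbrA
  apply hG.congr
  intro x _
  have hs := nIdx_spec θ x
  field_simp
  linarith [hs]

noncomputable def trivAt (θ : ℝ) : Bundle.Trivialization ℤ piCover where
  toFun x := (piCover x, nIdx θ x)
  invFun := invF θ
  source := piCover ⁻¹' bSet θ
  target := bSet θ ×ˢ Set.univ
  map_source' x hx := Set.mem_prod.mpr ⟨hx, trivial⟩
  map_target' y hy := by
    rw [Set.mem_preimage, piCover_invF]; exact hy.1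
  left_inv' x _ := left_inv' θ x
  right_inv' y _ := right_inv' θ y
  open_source := (isOpen_bSet θ).preimage continuous_piCover
  open_target := (isOpen_bSet θ).prod isOpen_univ
  continuousOn_toFun := by
    apply ContinuousOn.prodMk continuous_piCover.continuousOn
    rw [Topology.IsEmbedding.continuousOn_iff Int.isClosedEmbedding_coe_real.toIsEmbedding]
    exact continuousOn_nIdx θ
  continuousOn_invFun := by
    rw [Topology.IsInducing.continuousOn_iff Topology.IsInducing.subtypeVal]
    apply ContinuousOn.prodMk
    · fun_prop
    apply ContinuousOn.prodMk
    · apply ContinuousOn.add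
      apply ContinuousOn.add continuousOn_const
      · intro y hy
        have hc : Continuous fun y : ↥Lset × ℤ => y.1.1.2 * Complex.exp ((↑(-θ) : ℂ) * I) := by
          fun_prop
        exact (ContinuousAt.comp (f := fun y : ↥Lset × ℤ => y.1.1.2 * Complex.exp ((↑(-θ) : ℂ) * I))
          (Complex.continuousAt_arg hy.1) hc.continuousAt).continuousWithinAt
      · exact (continuous_const.mul
          (Int.isClosedEmbedding_coe_real.continuous.comp continuous_snd)).continuousOn
    · fun_prop
  baseSet := bSet θ
  open_baseSet := isOpen_bSet θ
  source_eq := rfl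
  target_eq := rfl
  proj_toFun x _ := rfl

end Stmt7

theorem stmt7 : IsCoveringMap piCover ∧ SimplyConnectedSpace ↥tL := by
  constructor
  · apply IsCoveringMap.mk piCover (fun _ => ℤ)
      (fun p => Stmt7.trivAt (Complex.arg p.1.2))
    intro p
    show p ∈ Stmt7.bSet (Complex.arg p.1.2)
    have hw : p.1.2 ≠ 0 := by
      have h2 : ‖p.1.1‖ < ‖p.1.2‖ := p.2
      intro h
      rw [h] at h2
      simp only [norm_zero] at h2
      exact absurd h2 (norm_nonneg _).not_gt
    have key : p.1.2 * Complex.exp ((↑(-Complex.arg p.1.2) : ℂ) * Complex.I)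
        = (‖p.1.2‖ : ℂ) := by
      have h := Complex.norm_mul_exp_arg_mul_I p.1.2
      have hee : Complex.exp ((↑(Complex.arg p.1.2) : ℂ) * Complex.I) *
          Complex.exp ((↑(-Complex.arg p.1.2) : ℂ) * Complex.I) = 1 := by
        rw [← Complex.exp_add, ← Complex.exp_zero]
        congr 1
        push_cast; ring
      linear_combination (-(Complex.exp ((↑(-Complex.arg p.1.2) : ℂ) * Complex.I))) * h +
        (‖p.1.2‖ : ℂ) * hee
    show p.1.2 * Complex.exp ((↑(-Complex.arg p.1.2) : ℂ) * Complex.I) ∈ Complex.slitPlane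
    rw [key]
    exact Complex.ofReal_mem_slitPlane.mpr (norm_pos_iff.mpr hw)
  · have hconv : Convex ℝ tL := by
      intro x hx y hy a b ha hb hab
      obtain ⟨hx1, hx2⟩ := hx
      obtain ⟨hy1, hy2⟩ := hy
      have hpos : 0 < a ∨ 0 < b := by
        rcases eq_or_lt_of_le ha with h | h
        · right; nlinarith
        · left; exact h
      constructor
      · show 0 < (a • x + b • y).2.2
        simp only [Prod.smul_snd, Prod.snd_add, smul_eq_mul]
        rcases hpos with h | h
        · nlinarith [mul_pos h hx1, mul_nonneg hb hy1.le]
        · nlinarith [mul_pos h hy1, mul_nonneg ha hx1.le]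
      · show ‖(a • x + b • y).1‖ < (a • x + b • y).2.2
        simp only [Prod.smul_fst, Prod.fst_add, Prod.smul_snd, Prod.snd_add, smul_eq_mul]
        calc ‖a • x.1 + b • y.1‖ ≤ ‖a • x.1‖ + ‖b • y.1‖ := norm_add_le _ _
          _ = a * ‖x.1‖ + b * ‖y.1‖ := by
              rw [norm_smul, norm_smul, Real.norm_of_nonneg ha, Real.norm_of_nonneg hb]
          _ < a * x.2.2 + b * y.2.2 := by
              rcases hpos with h | h
              · have h1 := mul_lt_mul_of_pos_left hx2 h
                have h2 := mul_le_mul_of_nonneg_left hy2.le hb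
                linarith
              · have h1 := mul_le_mul_of_nonneg_left hx2.le ha
                have h2 := mul_lt_mul_of_pos_left hy2 h
                linarith
    haveI : ContractibleSpace ↥tL :=
      hconv.contractibleSpace ⟨(0, 0, 1), by
        constructor
        · exact one_pos
        · simp⟩
    infer_instance
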